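/- Let d, n ≥ 1 and U ≥ 1 be integers, let A be an n × d matrix and b an n-dimensional vector, both with integer entries bounded by U in absolute value. If there exists x ∈ ℝ^d with x ≥ 0 (componentwise) and A·x ≤ b (componentwise), then there exists x ∈ ℝ^d with x ≥ 0, A·x ≤ b, and x_i ≤ ((d+1)·U)^(d+1) for every coordinate i. (Bound on a vertex solution via Cramer's rule: every feasible LP with bounded integer data has a feasible point with polynomially-bounded coordinates.) -/

import Mathlib

open Matrix

lemma detBound (d U : ℕ) (B : Matrix (Fin d) (Fin d) ℤ) (h : ∀ i j, |B i j| ≤ (U:ℤ)) :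
    |B.det| ≤ (d.factorial : ℤ) * (U:ℤ) ^ d := by
  rw [Matrix.det_apply]
  calc |∑ σ : Equiv.Perm (Fin d), Equiv.Perm.sign σ • ∏ i, B (σ i) i|
      ≤ ∑ σ : Equiv.Perm (Fin d), |Equiv.Perm.sign σ • ∏ i, B (σ i) i| :=
        Finset.abs_sum_le_sum_abs _ _
    _ ≤ ∑ _σ : Equiv.Perm (Fin d), (U:ℤ)^d := by
        apply Finset.sum_le_sum
        intro σ _
        have : |∏ i, B (σ i) i| ≤ (U:ℤ)^d := by
          rw [Finset.abs_prod]
          calc ∏ i, |B (σ i) i| ≤ ∏ _i : Fin d, (U:ℤ) :=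
                Finset.prod_le_prod (fun i _ => abs_nonneg _) (fun i _ => h _ _)
            _ = (U:ℤ)^d := by simp
        rcases Int.units_eq_one_or (Equiv.Perm.sign σ) with h1 | h1 <;>
          simp [h1, this, abs_neg]
    _ = (d.factorial : ℤ) * (U:ℤ)^d := by
        simp [Finset.sum_const, Fintype.card_perm]

lemma exists_orth {d : ℕ} (s : Set (Fin d → ℝ)) (h : Submodule.span ℝ s ≠ ⊤) :
    ∃ v : Fin d → ℝ, v ≠ 0 ∧ ∀ u ∈ s, u ⬝ᵥ v = 0 := by
  obtain ⟨f, hf, hf'⟩ := Submodule.exists_dual_map_eq_bot_of_lt_top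
    (lt_top_iff_ne_top.mpr h) inferInstance
  set v : Fin d → ℝ := fun j => f (Pi.single j 1) with hv
  have key : ∀ u : Fin d → ℝ, f u = u ⬝ᵥ v := by
    intro u
    conv_lhs => rw [pi_eq_sum_univ u]
    rw [map_sum]
    refine Finset.sum_congr rfl fun x _ => ?_
    have hs : (fun j => if x = j then (1:ℝ) else 0) = Pi.single x 1 := by
      ext j; simp [Pi.single_apply, eq_comm]
    simp only [_root_.map_smul, smul_eq_mul, dotProduct]
    rw [show (fun j => if x = j then (1:ℝ) else 0) = Pi.single x 1 from hs]
  have key' : ∀ u : Fin d → ℝ, f u = u ⬝ᵥ v := key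
  refine ⟨v, ?_, ?_⟩
  · intro hv0
    refine hf (LinearMap.ext fun u => ?_)
    rw [key u, hv0, dotProduct_zero, LinearMap.zero_apply]
  · intro u hu
    rw [← key]
    have : f u ∈ (Submodule.span ℝ s).map f := ⟨u, Submodule.subset_span hu, rfl⟩
    rw [hf'] at this
    simpa using this

lemma improve {d : ℕ} {ι : Type} [Fintype ι]
    (M : Matrix ι (Fin d) ℝ) (c : ι → ℝ)
    (hspan : ∀ v : Fin d → ℝ, v ≠ 0 → ∃ i, M i ⬝ᵥ v ≠ 0) :
    ∀ k : ℕ, ∀ x : Fin d → ℝ, (∀ i, M.mulVec x i ≤ c i) →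
      d ≤ k + Module.finrank ℝ
        (Submodule.span ℝ {u | ∃ i, M.mulVec x i = c i ∧ M i = u}) →
      ∃ y : Fin d → ℝ, (∀ i, M.mulVec y i ≤ c i) ∧
        Submodule.span ℝ {u | ∃ i, M.mulVec y i = c i ∧ M i = u} = ⊤ := by
  classical
  intro k
  induction k with
  | zero =>
    intro x hx hrk
    refine ⟨x, hx, ?_⟩
    apply Submodule.eq_top_of_finrank_eq
    have h1 : Module.finrank ℝ (Fin d → ℝ) = d := by simp
    have h2 : Module.finrank ℝ
        (Submodule.span ℝ {u | ∃ i, M.mulVec x i = c i ∧ M i = u}) ≤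
        Module.finrank ℝ (Fin d → ℝ) := Submodule.finrank_le _
    rw [h1] at h2
    omega
  | succ k ih =>
    intro x hx hrk
    set s : Set (Fin d → ℝ) := {u | ∃ i, M.mulVec x i = c i ∧ M i = u} with hs
    by_cases htop : Submodule.span ℝ s = ⊤
    · exact ⟨x, hx, htop⟩
    -- find direction
    obtain ⟨v, hv0, hvorth⟩ := exists_orth s htop
    -- choose sign: some w ∈ {v, -v} with positive row somewhere
    obtain ⟨i₀, hi₀⟩ := hspan v hv0
    obtain ⟨w, hw0, hworth, i₁, hi₁⟩ :
        ∃ w : Fin d → ℝ, w ≠ 0 ∧ (∀ u ∈ s, u ⬝ᵥ w = 0) ∧ ∃ i, 0 < M i ⬝ᵥ w := by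
      rcases lt_or_gt_of_ne hi₀ with hneg | hpos
      · refine ⟨-v, neg_ne_zero.mpr hv0, fun u hu => by simp [hvorth u hu], i₀, ?_⟩
        simpa using hneg
      · exact ⟨v, hv0, hvorth, i₀, hpos⟩
    set I : Finset ι := Finset.univ.filter (fun i => 0 < M i ⬝ᵥ w) with hI
    have hIne : I.Nonempty := ⟨i₁, by simp [hI, hi₁]⟩
    set t : ℝ := I.inf' hIne (fun i => (c i - M.mulVec x i) / (M i ⬝ᵥ w)) with ht
    have ht0 : 0 ≤ t := by
      apply Finset.le_inf'
      intro i hi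
      have hpos : 0 < M i ⬝ᵥ w := by simpa [hI] using hi
      exact div_nonneg (by linarith [hx i]) hpos.le
    obtain ⟨istar, histarI, histar⟩ := Finset.exists_mem_eq_inf' hIne
      (fun i => (c i - M.mulVec x i) / (M i ⬝ᵥ w))
    have histarpos : 0 < M istar ⬝ᵥ w := by simpa [hI] using histarI
    set y : Fin d → ℝ := x + t • w with hy
    have hyval : ∀ i, M.mulVec y i = M.mulVec x i + t * (M i ⬝ᵥ w) := by
      intro i
      show M i ⬝ᵥ (x + t • w) = M i ⬝ᵥ x + t * (M i ⬝ᵥ w)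
      rw [dotProduct_add, dotProduct_smul, smul_eq_mul]
    have hyfeas : ∀ i, M.mulVec y i ≤ c i := by
      intro i
      rw [hyval]
      rcases le_or_gt (M i ⬝ᵥ w) 0 with hle | hpos
      · nlinarith [hx i]
      · have hiI : i ∈ I := by simp [hI, hpos]
        have := Finset.inf'_le (fun i => (c i - M.mulVec x i) / (M i ⬝ᵥ w)) hiI
        rw [← ht] at this
        rw [le_div_iff₀ hpos] at this
        linarith
    -- tight set grows
    set s' : Set (Fin d → ℝ) := {u | ∃ i, M.mulVec y i = c i ∧ M i = u} with hs'
    have hss' : s ⊆ s' := by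
      rintro u ⟨i, hti, rfl⟩
      have horth : M i ⬝ᵥ w = 0 := hworth _ ⟨i, hti, rfl⟩
      exact ⟨i, by rw [hyval, horth, mul_zero, add_zero, hti], rfl⟩
    have hnew : M istar ∈ s' := by
      refine ⟨istar, ?_, rfl⟩
      rw [hyval, show t = (c istar - (M *ᵥ x) istar) / (M istar ⬝ᵥ w) from histar,
        div_mul_cancel₀ _ (ne_of_gt histarpos)]
      ring
    have horthspan : ∀ u ∈ Submodule.span ℝ s, u ⬝ᵥ w = 0 := by
      intro u hu
      induction hu using Submodule.span_induction with
      | mem u hu => exact hworth u hu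
      | zero => simp
      | add u u' _ _ h1 h2 => rw [add_dotProduct, h1, h2, add_zero]
      | smul a u _ h1 => rw [smul_dotProduct, h1, smul_zero]
    have hnotin : M istar ∉ Submodule.span ℝ s := by
      intro hmem
      have := horthspan _ hmem
      rw [this] at histarpos
      exact lt_irrefl _ histarpos
    have hlt : Submodule.span ℝ s < Submodule.span ℝ s' := by
      refine lt_of_le_of_ne (Submodule.span_mono hss') ?_
      intro heq
      exact hnotin (heq ▸ Submodule.subset_span hnew)
    have hrk' : d ≤ k + Module.finrank ℝ (Submodule.span ℝ s') := by
      have := Submodule.finrank_lt_finrank_of_lt hlt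
      omega
    exact ih y hyfeas hrk'

lemma vertex_bound {d U : ℕ} {ι : Type} [Fintype ι]
    (MZ : Matrix ι (Fin d) ℤ) (cZ : ι → ℤ)
    (hM : ∀ i q, |MZ i q| ≤ (U:ℤ)) (hc : ∀ i, |cZ i| ≤ (U:ℤ))
    (y : Fin d → ℝ) (M : Matrix ι (Fin d) ℝ) (c : ι → ℝ)
    (hMdef : ∀ i q, M i q = (MZ i q : ℝ)) (hcdef : ∀ i, c i = (cZ i : ℝ))
    (htop : Submodule.span ℝ {u | ∃ i, M.mulVec y i = c i ∧ M i = u} = ⊤) :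
    ∀ j, |y j| ≤ (d.factorial : ℝ) * (U:ℝ)^d := by
  classical
  set s : Set (Fin d → ℝ) := {u | ∃ i, M.mulVec y i = c i ∧ M i = u} with hs
  obtain ⟨bs, hbsub, hbspan, hbli⟩ := exists_linearIndependent ℝ s
  have hbfin : bs.Finite := by
    apply Set.Finite.subset (Set.finite_range (fun i => M i))
    intro u hu
    obtain ⟨i, _, rfl⟩ := hbsub hu
    exact ⟨i, rfl⟩
  haveI : Fintype bs := hbfin.fintype
  have hspan_top : Submodule.span ℝ (Set.range ((↑) : bs → (Fin d → ℝ))) = ⊤ := by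
    rw [Subtype.range_coe, hbspan]; exact htop
  have bbasis : Module.Basis bs ℝ (Fin d → ℝ) := Module.Basis.mk hbli (le_of_eq hspan_top.symm)
  have hcard : Fintype.card bs = d := by
    have := Module.finrank_eq_card_basis bbasis
    simp only [Module.finrank_fin_fun] at this
    omega
  have e : Fin d ≃ bs := (Fintype.equivFinOfCardEq hcard).symm
  have hmem : ∀ p : Fin d, ∃ i, M.mulVec y i = c i ∧ M i = ((e p : bs) : Fin d → ℝ) :=
    fun p => hbsub (e p).2
  choose g hg1 hg2 using hmem
  set B : Matrix (Fin d) (Fin d) ℝ := fun p => M (g p) with hB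
  set BZ : Matrix (Fin d) (Fin d) ℤ := fun p => MZ (g p) with hBZ
  set c' : Fin d → ℝ := fun p => c (g p) with hc'
  set c'Z : Fin d → ℤ := fun p => cZ (g p) with hc'Z
  have hBrows : (fun p => B p) = ((↑) : bs → (Fin d → ℝ)) ∘ e := by
    funext p; exact hg2 p
  have hBli : LinearIndependent ℝ (fun p => B p) := by
    rw [hBrows]
    exact hbli.comp e e.injective
  have hunit : IsUnit B := linearIndependent_rows_iff_isUnit.mp hBli
  have hdet : IsUnit B.det := (isUnit_iff_isUnit_det B).mp hunit
  have hBcast : B = BZ.map (Int.cast : ℤ → ℝ) := by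
    ext p q; exact hMdef (g p) q
  have hdetcast : B.det = ((BZ.det : ℤ) : ℝ) := by
    rw [hBcast]
    exact (RingHom.map_det (Int.castRingHom ℝ) BZ).symm
  have hdetZ : BZ.det ≠ 0 := by
    intro h0
    rw [hdetcast, h0] at hdet
    simp at hdet
  have hdetge : (1:ℝ) ≤ |B.det| := by
    rw [hdetcast]
    have : (1:ℤ) ≤ |BZ.det| := Int.one_le_abs hdetZ
    calc (1:ℝ) = ((1:ℤ):ℝ) := by norm_num
      _ ≤ ((|BZ.det| : ℤ) : ℝ) := by exact_mod_cast this
      _ = |((BZ.det : ℤ) : ℝ)| := by push_cast; ring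
  have hBy : B.mulVec y = c' := by
    funext p
    show M (g p) ⬝ᵥ y = c (g p)
    exact hg1 p
  have hcram : cramer B c' = B.det • y := by
    apply mulVec_injective_iff_isUnit.mpr hunit
    rw [mulVec_cramer, mulVec_smul, hBy]
  intro j
  have hyj : y j = cramer B c' j / B.det := by
    have := congrFun hcram j
    simp only [Pi.smul_apply, smul_eq_mul] at this
    field_simp [hdet.ne_zero]
    linarith [this]
  have hzj : cramer B c' j = (((BZ.updateCol j c'Z).det : ℤ) : ℝ) := by
    rw [cramer_apply]
    have : B.updateCol j c' = (BZ.updateCol j c'Z).map (Int.cast : ℤ → ℝ) := by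
      ext p q
      rw [Matrix.map_apply, Matrix.updateCol_apply, Matrix.updateCol_apply]
      split
      · exact hcdef (g p)
      · exact hMdef (g p) q
    rw [this]
    exact (RingHom.map_det (Int.castRingHom ℝ) _).symm
  have hbnd : |(BZ.updateCol j c'Z).det| ≤ (d.factorial : ℤ) * (U:ℤ)^d := by
    apply detBound
    intro p q
    rw [Matrix.updateCol_apply]
    split
    · exact hc (g p)
    · exact hM (g p) q
  calc |y j| = |cramer B c' j| / |B.det| := by rw [hyj, abs_div]
    _ ≤ |cramer B c' j| / 1 := by
        apply div_le_div_of_nonneg_left ?_ ?_ hdetge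
        · exact abs_nonneg _
        · norm_num
    _ = |cramer B c' j| := by norm_num
    _ ≤ (d.factorial : ℝ) * (U:ℝ)^d := by
        rw [hzj]
        calc |(((BZ.updateCol j c'Z).det : ℤ) : ℝ)|
            = ((|(BZ.updateCol j c'Z).det| : ℤ) : ℝ) := by push_cast; ring
          _ ≤ (((d.factorial : ℤ) * (U:ℤ)^d : ℤ) : ℝ) := by exact_mod_cast hbnd
          _ = (d.factorial : ℝ) * (U:ℝ)^d := by push_cast; ring

/-- Bound on a vertex solution via Cramer's rule: every feasible LP
`Ax ≤ b, x ≥ 0` with integer data bounded by `U` has a feasible point whose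
coordinates are at most `((d+1)U)^(d+1)`. -/
theorem stmt_12 (d n U : ℕ) (hd : 1 ≤ d) (hn : 1 ≤ n) (hU : 1 ≤ U)
    (A : Matrix (Fin n) (Fin d) ℝ) (b : Fin n → ℝ)
    (hA : ∀ i j, ∃ z : ℤ, A i j = (z : ℝ) ∧ |z| ≤ (U : ℤ))
    (hb : ∀ i, ∃ z : ℤ, b i = (z : ℝ) ∧ |z| ≤ (U : ℤ))
    (hfeas : ∃ x : Fin d → ℝ, (∀ j, 0 ≤ x j) ∧ ∀ i, A.mulVec x i ≤ b i) :
    ∃ x : Fin d → ℝ, (∀ j, 0 ≤ x j) ∧ (∀ i, A.mulVec x i ≤ b i) ∧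
      ∀ j, x j ≤ (((d : ℝ) + 1) * U) ^ (d + 1) := by
  classical
  choose AZ hAZ hAZb using hA
  choose bZ hbZ hbZb using hb
  set ι := Sum (Fin n) (Fin d) with hι
  set MZ : Matrix ι (Fin d) ℤ :=
    Matrix.of (Sum.elim AZ (fun j q => if q = j then (-1:ℤ) else 0)) with hMZ
  set cZ : ι → ℤ := Sum.elim bZ (fun _ => 0) with hcZ
  set M : Matrix ι (Fin d) ℝ := Matrix.of (fun i q => ((MZ i q : ℤ) : ℝ)) with hM
  set c : ι → ℝ := fun i => ((cZ i : ℤ) : ℝ) with hc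
  have hMinl : ∀ i, M (Sum.inl i) = A i := by
    intro i; funext q
    show ((AZ i q : ℤ) : ℝ) = A i q
    rw [hAZ]
  have hMinr : ∀ (j : Fin d) (x : Fin d → ℝ), M (Sum.inr j) ⬝ᵥ x = -(x j) := by
    intro j x
    show (fun q => (((if q = j then (-1:ℤ) else 0) : ℤ) : ℝ)) ⬝ᵥ x = -(x j)
    simp only [dotProduct]
    rw [Finset.sum_congr rfl (fun q _ => show (((if q = j then (-1:ℤ) else 0) : ℤ) : ℝ) * x q
      = if q = j then -(x q) else 0 by split <;> simp)]
    simp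
  have hcinl : ∀ i, c (Sum.inl i) = b i := by
    intro i; show ((bZ i : ℤ) : ℝ) = b i; rw [hbZ]
  have hcinr : ∀ j, c (Sum.inr j) = 0 := by intro j; simp [hc, hcZ]
  -- feasibility transfer
  obtain ⟨x₀, hx₀pos, hx₀feas⟩ := hfeas
  have hx₀ : ∀ i, M.mulVec x₀ i ≤ c i := by
    rintro (i | j)
    · show M (Sum.inl i) ⬝ᵥ x₀ ≤ c (Sum.inl i)
      rw [hMinl, hcinl]
      exact hx₀feas i
    · show M (Sum.inr j) ⬝ᵥ x₀ ≤ c (Sum.inr j)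
      rw [hMinr, hcinr]
      simp [hx₀pos j]
  -- row span condition
  have hspan : ∀ v : Fin d → ℝ, v ≠ 0 → ∃ i, M i ⬝ᵥ v ≠ 0 := by
    intro v hv
    obtain ⟨j, hj⟩ := Function.ne_iff.mp hv
    exact ⟨Sum.inr j, by rw [show M (Sum.inr j) ⬝ᵥ v = -(v j) from hMinr j v]; simpa using hj⟩
  obtain ⟨y, hyfeas, hytop⟩ := improve M c hspan d x₀ hx₀ (by omega)
  have hbound := vertex_bound MZ cZ
    (by rintro (i | j) q
        · exact hAZb i q
        · show |if q = j then (-1:ℤ) else 0| ≤ (U:ℤ)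
          split <;> simp <;> omega)
    (by rintro (i | j)
        · exact hbZb i
        · show |(0:ℤ)| ≤ (U:ℤ); simp)
    y M c (fun i q => rfl) (fun i => rfl) hytop
  have hynn : ∀ j, 0 ≤ y j := by
    intro j
    have := hyfeas (Sum.inr j)
    rw [show M.mulVec y (Sum.inr j) = M (Sum.inr j) ⬝ᵥ y from rfl, hMinr, hcinr] at this
    linarith
  refine ⟨y, hynn, ?_, ?_⟩
  · intro i
    have := hyfeas (Sum.inl i)
    rw [show M.mulVec y (Sum.inl i) = M (Sum.inl i) ⬝ᵥ y from rfl, hMinl, hcinl] at this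
    exact this
  · intro j
    have h1 : y j ≤ (d.factorial : ℝ) * (U:ℝ)^d := (abs_le.mp (hbound j)).2.trans_eq' rfl
    have h2 : (d.factorial * U^d : ℕ) ≤ ((d+1)*U)^(d+1) := by
      calc d.factorial * U^d ≤ (d+1)^(d+1) * U^(d+1) := by
            apply Nat.mul_le_mul
            · calc d.factorial ≤ d^d := Nat.factorial_le_pow d
                _ ≤ (d+1)^d := Nat.pow_le_pow_left (by omega) d
                _ ≤ (d+1)^(d+1) := Nat.pow_le_pow_right (by omega) (by omega)
            · exact Nat.pow_le_pow_right hU (by omega)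
        _ = ((d+1)*U)^(d+1) := (Nat.mul_pow _ _ _).symm
    calc y j ≤ (d.factorial : ℝ) * (U:ℝ)^d := h1
      _ = ((d.factorial * U^d : ℕ) : ℝ) := by push_cast; ring
      _ ≤ ((((d+1)*U)^(d+1) : ℕ) : ℝ) := by exact_mod_cast h2
      _ = (((d : ℝ) + 1) * U) ^ (d + 1) := by push_cast; ring
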